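/- Let q be a real number with 0 < q < 1 and let z be a real number with e^{|z|} q < 1. Then ∑_{t=1}^∞ (z^t / t!) ∑_{n=1}^∞ σ_{t-1}(n) q^n = ∑_{ℓ=1}^∞ ( log(1 - q^ℓ) - log(1 - e^z q^ℓ) ), i.e., the exponential generating function of the divisor generating functions K_t(q) equals log( (q)_∞ / (e^z q)_∞ ). -/

import Mathlib

open Real

private lemma aux_exp (x : ℝ) :
    HasSum (fun t : ℕ => x ^ (t+1) / (Nat.factorial (t+1) : ℝ)) (Real.exp x - 1) := by
  have h : HasSum (fun n : ℕ => x ^ n / (Nat.factorial n : ℝ)) (Real.exp x) := by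
    rw [Real.exp_eq_exp_ℝ]
    exact NormedSpace.expSeries_div_hasSum_exp x
  have := (hasSum_nat_add_iff' 1).mpr h
  simpa using this

private def divEquiv : (ℕ × ℕ) ≃ (Σ n : ℕ, {p : ℕ × ℕ // p ∈ (n+1).divisorsAntidiagonal}) where
  toFun dl := ⟨(dl.1+1)*(dl.2+1)-1, ⟨(dl.1+1, dl.2+1), by
    rw [Nat.mem_divisorsAntidiagonal]
    dsimp only
    have h : 1 ≤ (dl.1+1)*(dl.2+1) := Nat.one_le_iff_ne_zero.mpr (by positivity)
    omega⟩⟩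
  invFun s := (s.2.1.1 - 1, s.2.1.2 - 1)
  left_inv dl := by simp
  right_inv s := by
    obtain ⟨n, ⟨⟨a, b⟩, h⟩⟩ := s
    obtain ⟨h1, -⟩ := Nat.mem_divisorsAntidiagonal.mp h
    simp only at h1
    have ha : a ≠ 0 := by rintro rfl; simp at h1
    have hb : b ≠ 0 := by rintro rfl; simp at h1
    have hn : n = a * b - 1 := by omega
    subst hn
    have ha1 : a - 1 + 1 = a := by omega
    have hb1 : b - 1 + 1 = b := by omega
    exact Sigma.subtype_ext (by dsimp only; rw [ha1, hb1]) (by dsimp only; rw [ha1, hb1])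

private lemma tsum_divisors_eq {g : ℕ × ℕ → ℝ}
    (hg : Summable fun dl : ℕ × ℕ => g (dl.1+1, dl.2+1)) :
    ∑' n : ℕ, ∑ p ∈ (n+1).divisorsAntidiagonal, g p = ∑' dl : ℕ × ℕ, g (dl.1+1, dl.2+1) := by
  have h2 : Summable fun s : Σ n : ℕ, {p : ℕ × ℕ // p ∈ (n+1).divisorsAntidiagonal} => g s.2.1 := by
    rw [← divEquiv.summable_iff]
    exact hg
  have h3 : ∑' dl : ℕ × ℕ, g (dl.1+1, dl.2+1)
      = ∑' s : Σ n : ℕ, {p : ℕ × ℕ // p ∈ (n+1).divisorsAntidiagonal}, g s.2.1 :=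
    divEquiv.tsum_eq (fun s => g s.2.1)
  rw [h3, h2.tsum_sigma]
  congr 1
  ext n
  exact (Finset.tsum_subtype _ g).symm

/-- the triple-indexed summand: index `((d, l), t)` -/
private noncomputable def Fz (q z : ℝ) (x : (ℕ × ℕ) × ℕ) : ℝ :=
  z ^ (x.2+1) / (Nat.factorial (x.2+1) : ℝ) *
    (((x.1.1+1 : ℕ) : ℝ) ^ x.2 * q ^ ((x.1.1+1)*(x.1.2+1)))

/-- the sum over `t` of `Fz`, as a function of `(d, l)` -/
private noncomputable def Az (q z : ℝ) (p : ℕ × ℕ) : ℝ :=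
  (Real.exp (z * ((p.1+1 : ℕ) : ℝ)) - 1) * q ^ ((p.1+1)*(p.2+1)) / ((p.1+1 : ℕ) : ℝ)

private lemma hasSum_Fz (q z : ℝ) (p : ℕ × ℕ) :
    HasSum (fun t => Fz q z (p, t)) (Az q z p) := by
  obtain ⟨d, l⟩ := p
  have hd : ((d+1 : ℕ) : ℝ) ≠ 0 := by positivity
  have h := (aux_exp (z * ((d+1 : ℕ) : ℝ))).mul_right
    (q ^ ((d+1)*(l+1)) / ((d+1 : ℕ) : ℝ))
  have e : ∀ t : ℕ, (z * ((d+1 : ℕ) : ℝ)) ^ (t+1) / (Nat.factorial (t+1) : ℝ) *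
      (q ^ ((d+1)*(l+1)) / ((d+1 : ℕ) : ℝ)) = Fz q z ((d, l), t) := by
    intro t
    have hfac : (Nat.factorial (t+1) : ℝ) ≠ 0 := by positivity
    unfold Fz
    rw [mul_pow, pow_succ ((d+1 : ℕ) : ℝ) t]
    field_simp
  rw [funext e] at h
  have hA : Az q z (d, l) = (Real.exp (z * ((d+1 : ℕ) : ℝ)) - 1) *
      (q ^ ((d+1)*(l+1)) / ((d+1 : ℕ) : ℝ)) := by
    unfold Az
    ring
  rw [hA]
  exact h

private lemma summable_geom_aux {q z : ℝ} (hq0 : 0 < q) (hq1 : q < 1)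
    (hz : Real.exp |z| * q < 1) :
    Summable fun p : ℕ × ℕ => (Real.exp |z| * q) ^ (p.1+1) * q ^ p.2 := by
  have hr00 : (0:ℝ) ≤ Real.exp |z| * q := by positivity
  have h1 : Summable fun d : ℕ => (Real.exp |z| * q) ^ (d+1) := by
    simpa [pow_succ] using (summable_geometric_of_lt_one hr00 hz).mul_right (Real.exp |z| * q)
  exact h1.mul_of_nonneg (summable_geometric_of_lt_one hq0.le hq1)
    (fun d => by positivity) (fun l => by positivity)

private lemma summable_Fz {q z : ℝ} (hq0 : 0 < q) (hq1 : q < 1)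
    (hz : Real.exp |z| * q < 1) : Summable (Fz q z) := by
  set r0 : ℝ := Real.exp |z| * q with hr0
  have hr00 : (0:ℝ) ≤ r0 := by positivity
  -- dominating function
  have key : Summable fun x : (ℕ × ℕ) × ℕ =>
      (|z| * ((x.1.1+1 : ℕ) : ℝ)) ^ (x.2+1) / (Nat.factorial (x.2+1) : ℝ) *
        q ^ ((x.1.1+1)*(x.1.2+1)) := by
    refine (summable_prod_of_nonneg ?_).mpr ⟨fun p => ?_, ?_⟩
    · intro x
      dsimp only
      positivity
    · exact ((aux_exp (|z| * ((p.1+1 : ℕ) : ℝ))).summable).mul_right (q ^ ((p.1+1)*(p.2+1)))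
    · have htsum : ∀ p : ℕ × ℕ,
          ∑' t, (|z| * ((p.1+1 : ℕ) : ℝ)) ^ (t+1) / (Nat.factorial (t+1) : ℝ) *
            q ^ ((p.1+1)*(p.2+1))
          = (Real.exp (|z| * ((p.1+1 : ℕ) : ℝ)) - 1) * q ^ ((p.1+1)*(p.2+1)) := fun p =>
        ((aux_exp (|z| * ((p.1+1 : ℕ) : ℝ))).mul_right (q ^ ((p.1+1)*(p.2+1)))).tsum_eq
      have S : Summable fun p : ℕ × ℕ =>
          (Real.exp (|z| * ((p.1+1 : ℕ) : ℝ)) - 1) * q ^ ((p.1+1)*(p.2+1)) := by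
        apply Summable.of_nonneg_of_le (fun p => ?_) (fun p => ?_) (summable_geom_aux hq0 hq1 hz)
        · have := Real.one_le_exp (by positivity : (0:ℝ) ≤ |z| * ((p.1+1 : ℕ) : ℝ))
          have hq' : (0:ℝ) ≤ q ^ ((p.1+1)*(p.2+1)) := by positivity
          nlinarith
        · obtain ⟨d, l⟩ := p
          rw [← hr0]
          have hqp : (0:ℝ) ≤ q ^ ((d+1)*(l+1)) := by positivity
          calc (Real.exp (|z| * ((d+1 : ℕ) : ℝ)) - 1) * q ^ ((d+1)*(l+1))
              ≤ Real.exp (|z| * ((d+1 : ℕ) : ℝ)) * q ^ ((d+1)*(l+1)) := by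
                apply mul_le_mul_of_nonneg_right _ hqp
                linarith [Real.exp_pos (|z| * ((d+1 : ℕ) : ℝ))]
            _ = (Real.exp |z| * q ^ (l+1)) ^ (d+1) := by
                rw [mul_comm (|z|) ((d+1 : ℕ) : ℝ), Real.exp_nat_mul, mul_pow,
                  mul_comm (d+1) (l+1), pow_mul]
            _ = (r0 * q ^ l) ^ (d+1) := by
                rw [hr0, pow_succ q l]; ring_nf
            _ = r0 ^ (d+1) * (q ^ l) ^ (d+1) := mul_pow _ _ _
            _ ≤ r0 ^ (d+1) * q ^ l := by
                apply mul_le_mul_of_nonneg_left _ (by positivity)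
                calc (q ^ l) ^ (d+1) ≤ (q ^ l) ^ 1 :=
                    pow_le_pow_of_le_one (by positivity) (pow_le_one₀ hq0.le hq1.le) (by omega)
                  _ = q ^ l := pow_one _
      exact S.congr fun p => (htsum p).symm
  apply Summable.of_norm
  apply Summable.of_nonneg_of_le (fun x => norm_nonneg _) (fun x => ?_) key
  obtain ⟨⟨d, l⟩, t⟩ := x
  unfold Fz
  rw [Real.norm_eq_abs, abs_mul, abs_mul, abs_div, abs_pow, abs_pow, abs_pow]
  rw [Nat.abs_cast, abs_of_pos hq0, abs_of_pos (by positivity : (0:ℝ) < ((d+1:ℕ):ℝ))]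
  rw [mul_pow]
  have h1 : ((d+1 : ℕ) : ℝ) ^ t ≤ ((d+1 : ℕ) : ℝ) ^ (t+1) :=
    pow_le_pow_right₀ (by exact_mod_cast Nat.one_le_iff_ne_zero.mpr (by omega)) (by omega)
  have hfac : (0:ℝ) < (Nat.factorial (t+1) : ℝ) := by positivity
  rw [div_mul_eq_mul_div, div_mul_eq_mul_div, div_le_div_iff_of_pos_right hfac]
  have hq' : (0:ℝ) ≤ q ^ ((d+1)*(l+1)) := by positivity
  have hz' : (0:ℝ) ≤ |z| ^ (t+1) := by positivity
  calc |z| ^ (t+1) * (((d+1 : ℕ) : ℝ) ^ t * q ^ ((d+1)*(l+1)))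
      ≤ |z| ^ (t+1) * (((d+1 : ℕ) : ℝ) ^ (t+1) * q ^ ((d+1)*(l+1))) := by
        apply mul_le_mul_of_nonneg_left _ hz'
        exact mul_le_mul_of_nonneg_right h1 hq'
    _ = |z| ^ (t+1) * ((d+1 : ℕ) : ℝ) ^ (t+1) * q ^ ((d+1)*(l+1)) := by ring

private lemma summable_gt {q : ℝ} (hq0 : 0 < q) (hq1 : q < 1) (t : ℕ) :
    Summable fun dl : ℕ × ℕ => ((dl.1+1 : ℕ) : ℝ) ^ t * q ^ ((dl.1+1)*(dl.2+1)) := by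
  have hb : Summable fun dl : ℕ × ℕ =>
      (((dl.1+1 : ℕ) : ℝ) ^ t * q ^ (dl.1+1)) * q ^ dl.2 := by
    have h0 : Summable (fun n : ℕ => (n : ℝ) ^ t * q ^ n) :=
      summable_pow_mul_geometric_of_norm_lt_one t
        (by rwa [Real.norm_eq_abs, abs_of_pos hq0])
    have h1 : Summable fun d : ℕ => ((d+1 : ℕ) : ℝ) ^ t * q ^ (d+1) :=
      (summable_nat_add_iff 1).mpr h0
    exact h1.mul_of_nonneg (summable_geometric_of_lt_one hq0.le hq1)
      (fun d => by positivity) (fun l => by positivity)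
  apply Summable.of_nonneg_of_le (fun dl => by positivity) (fun dl => ?_) hb
  obtain ⟨d, l⟩ := dl
  have hexp : q ^ ((d+1)*(l+1)) ≤ q ^ (d+1) * q ^ l := by
    rw [← pow_add]
    apply pow_le_pow_of_le_one hq0.le hq1.le
    have hl : l ≤ (d+1)*l := Nat.le_mul_of_pos_left l (by omega)
    rw [Nat.mul_add, Nat.mul_one]
    omega
  calc ((d+1 : ℕ) : ℝ) ^ t * q ^ ((d+1)*(l+1))
      ≤ ((d+1 : ℕ) : ℝ) ^ t * (q ^ (d+1) * q ^ l) :=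
        mul_le_mul_of_nonneg_left hexp (by positivity)
    _ = ((d+1 : ℕ) : ℝ) ^ t * q ^ (d+1) * q ^ l := by ring

private lemma inner_eq {q : ℝ} (hq0 : 0 < q) (hq1 : q < 1) (t : ℕ) :
    ∑' n : ℕ, (∑ d ∈ (n+1).divisors, (d : ℝ) ^ t) * q ^ (n+1)
    = ∑' dl : ℕ × ℕ, ((dl.1+1 : ℕ) : ℝ) ^ t * q ^ ((dl.1+1)*(dl.2+1)) := by
  have hstep : ∀ n : ℕ, (∑ d ∈ (n+1).divisors, (d : ℝ) ^ t) * q ^ (n+1)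
      = ∑ p ∈ (n+1).divisorsAntidiagonal, ((p.1 : ℝ) ^ t * q ^ (p.1 * p.2)) := by
    intro n
    rw [Nat.sum_divisorsAntidiagonal (fun a b => (a:ℝ)^t * q^(a*b)), Finset.sum_mul]
    apply Finset.sum_congr rfl
    intro d hd
    rw [Nat.mul_div_cancel' (Nat.mem_divisors.mp hd).1]
  rw [tsum_congr hstep]
  exact tsum_divisors_eq (g := fun p => (p.1 : ℝ) ^ t * q ^ (p.1 * p.2))
    (summable_gt hq0 hq1 t)

private lemma log_eq {q z : ℝ} (hq0 : 0 < q) (hq1 : q < 1)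
    (hz : Real.exp |z| * q < 1) (l : ℕ) :
    Real.log (1 - q ^ (l+1)) - Real.log (1 - Real.exp z * q ^ (l+1))
    = ∑' d : ℕ, Az q z (d, l) := by
  have hql : q ^ (l+1) ≤ q := by
    calc q ^ (l+1) = q ^ l * q := pow_succ q l
      _ ≤ 1 * q := mul_le_mul_of_nonneg_right (pow_le_one₀ hq0.le hq1.le) hq0.le
      _ = q := one_mul q
  have hu : |q ^ (l+1)| < 1 := by
    rw [abs_of_pos (by positivity)]
    linarith
  have hv0 : (0:ℝ) < Real.exp z * q ^ (l+1) := by positivity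
  have hv : |Real.exp z * q ^ (l+1)| < 1 := by
    rw [abs_of_pos hv0]
    calc Real.exp z * q ^ (l+1)
        ≤ Real.exp |z| * q ^ (l+1) :=
          mul_le_mul_of_nonneg_right (Real.exp_le_exp.mpr (le_abs_self z)) (by positivity)
      _ ≤ Real.exp |z| * q := mul_le_mul_of_nonneg_left hql (Real.exp_pos _).le
      _ < 1 := hz
  have H1 := hasSum_pow_div_log_of_abs_lt_one hu
  have H2 := hasSum_pow_div_log_of_abs_lt_one hv
  have H := H2.sub H1
  have hterm : ∀ d : ℕ,
      ((Real.exp z * q ^ (l+1)) ^ (d+1) / ((d:ℝ)+1) - (q ^ (l+1)) ^ (d+1) / ((d:ℝ)+1))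
      = Az q z (d, l) := by
    intro d
    have e1 : (Real.exp z) ^ (d+1) = Real.exp (z * ((d+1:ℕ) : ℝ)) := by
      rw [mul_comm, Real.exp_nat_mul]
    have e2 : (q ^ (l+1)) ^ (d+1) = q ^ ((d+1)*(l+1)) := by
      rw [← pow_mul, mul_comm]
    have e3 : ((d:ℝ)+1) = ((d+1 : ℕ) : ℝ) := by push_cast; ring
    unfold Az
    rw [mul_pow, e1, e2, e3]
    ring
  rw [funext hterm] at H
  rw [H.tsum_eq]
  ring

theorem cumulant_egf_eq_log (q z : ℝ) (hq0 : 0 < q) (hq1 : q < 1)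
    (hz : Real.exp |z| * q < 1) :
    ∑' t : ℕ, (z ^ (t + 1) / (Nat.factorial (t + 1) : ℝ)) *
        ∑' n : ℕ, (∑ d ∈ (n + 1).divisors, (d : ℝ) ^ t) * q ^ (n + 1)
    = ∑' l : ℕ, (Real.log (1 - q ^ (l + 1)) - Real.log (1 - Real.exp z * q ^ (l + 1))) := by
  have hFsum := summable_Fz hq0 hq1 hz
  have hAz : ∀ p : ℕ × ℕ, HasSum (fun t => Fz q z (p, t)) (Az q z p) := hasSum_Fz q z
  have hAzsum : Summable (Az q z) :=
    hFsum.prod.congr (fun p => (hAz p).tsum_eq)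
  calc ∑' t : ℕ, (z ^ (t + 1) / (Nat.factorial (t + 1) : ℝ)) *
        ∑' n : ℕ, (∑ d ∈ (n + 1).divisors, (d : ℝ) ^ t) * q ^ (n + 1)
      = ∑' t : ℕ, ∑' p : ℕ × ℕ, Fz q z (p, t) := by
        apply tsum_congr
        intro t
        rw [inner_eq hq0 hq1 t, ← tsum_mul_left]
        exact tsum_congr fun dl => by simp only [Fz]
    _ = ∑' p : ℕ × ℕ, ∑' t : ℕ, Fz q z (p, t) := Summable.tsum_comm (f := fun p t => Fz q z (p, t)) hFsum
    _ = ∑' p : ℕ × ℕ, Az q z p := tsum_congr fun p => (hAz p).tsum_eq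
    _ = ∑' d : ℕ, ∑' l : ℕ, Az q z (d, l) := hAzsum.tsum_prod
    _ = ∑' l : ℕ, ∑' d : ℕ, Az q z (d, l) := (Summable.tsum_comm (f := fun d l => Az q z (d, l)) hAzsum).symm
    _ = ∑' l : ℕ, (Real.log (1 - q ^ (l + 1)) - Real.log (1 - Real.exp z * q ^ (l + 1))) :=
        tsum_congr fun l => (log_eq hq0 hq1 hz l).symm
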